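/- The pocset of half-spaces (Proposition 'pocset', finite case): Let a hierarchical family of trees be given, with 0-consistent set Q. Then every half-space of Q is nonempty and disjoint from its complementary half-space. Call two walls transverse if, for half-spaces A of the first and B of the second, none of the four inclusions A ⊆ B, A ⊆ B*, A* ⊆ B, A* ⊆ B* of subsets of Q holds (this is independent of the choice of A and B). Then: (1) if two walls labeled by domains U and V are transverse, then U ⊥ V; equivalently, if U and V are not orthogonal then at least one of the four inclusions holds; and (2) any family of pairwise transverse walls has cardinality at most the maximal cardinality of a pairwise-orthogonal subset of 𝒰. In particular, the half-spaces of Q, partially ordered by inclusion and equipped with the complementation involution, form a pocset of finite width. -/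

import Mathlib

/-- `a` and `b` lie in the same connected component of the tree `G` with the vertex `w`
deleted (equivalently: `a, b ≠ w` and `w` does not lie on the geodesic from `a` to `b`). -/
def treeSameComp {α : Type*} (G : SimpleGraph α) (w a b : α) : Prop :=
  a ≠ w ∧ b ≠ w ∧ G.dist a w + G.dist w b ≠ G.dist a b

/-- `m` is the median of `a`, `b`, `c` in the tree `G`: it lies on all three
pairwise geodesics. -/
def IsTreeMedian {α : Type*} (G : SimpleGraph α) (a b c m : α) : Prop :=
  G.dist a m + G.dist m b = G.dist a b ∧
  G.dist a m + G.dist m c = G.dist a c ∧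
  G.dist b m + G.dist m c = G.dist b c

/-- A hierarchical family of trees: a finite index set `Idx` of domains with relations
`⊏` (proper nesting) and `⊥` (orthogonality), a finite simplicial tree `G U` on the
finite vertex set `Vtx U` for each domain `U`, marked vertices labeled by the finite set
`F`, and relative projection data `δup`/`δdown` satisfying coherence, bounded geodesic
image, and consistency of the marked tuples. -/
structure HFT (Idx : Type*) [Fintype Idx] (Vtx : Idx → Type*) [∀ U, Fintype (Vtx U)]
    (F : Type*) [Fintype F] where
  /-- proper nesting `⊏` -/
  pnest : Idx → Idx → Prop
  /-- orthogonality `⊥` -/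
  orth : Idx → Idx → Prop
  pnest_irrefl : ∀ U, ¬ pnest U U
  pnest_trans : ∀ U V W, pnest U V → pnest V W → pnest U W
  /-- `⊏` has a unique maximal element -/
  max_unique : ∃! m : Idx, ∀ W, ¬ pnest m W
  orth_symm : ∀ U V, orth U V → orth V U
  orth_irrefl : ∀ U, ¬ orth U U
  orth_not_pnest : ∀ U V, orth U V → ¬ pnest U V
  /-- the tree associated to each domain -/
  G : (U : Idx) → SimpleGraph (Vtx U)
  tree : ∀ U, (G U).IsTree
  /-- the marked vertex of `T_U` labeled by `f : F` -/
  mark : (U : Idx) → F → Vtx U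
  /-- every leaf is marked -/
  leaf_marked : ∀ (U : Idx) (v : Vtx U),
    Set.Subsingleton {w : Vtx U | (G U).Adj v w} → ∃ f : F, mark U f = v
  /-- the relative projection vertex `δup V U = δ^V_U ∈ T_U`
  (relevant when `V ⊏ U` or `V ⋔ U`) -/
  δup : (V U : Idx) → Vtx U
  /-- the relative projection map `δdown U V = δ^U_V : T_U → T_V` (for `V ⊏ U`) -/
  δdown : (U V : Idx) → Vtx U → Vtx V
  /-- every component of `T_U − δ^V_U` contains a marked vertex -/
  comp_marked : ∀ V U : Idx,
    (pnest V U ∨ (V ≠ U ∧ ¬ pnest V U ∧ ¬ pnest U V ∧ ¬ orth V U)) →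
    ∀ a : Vtx U, a ≠ δup V U → ∃ f : F, treeSameComp (G U) (δup V U) a (mark U f)
  /-- `δ^U_W = δ^V_W` whenever `U ⊥ V`, `V ⊏ W`, and `U ⊏ W` or `U ⋔ W` -/
  δ_coherent : ∀ U V W : Idx, orth U V → pnest V W →
    (pnest U W ∨ (U ≠ W ∧ ¬ pnest U W ∧ ¬ pnest W U ∧ ¬ orth U W)) →
    δup U W = δup V W
  /-- bounded geodesic image: `δ^U_V` is constant on each component of `T_U − δ^V_U` … -/
  bgi_const : ∀ U V : Idx, pnest V U → ∀ a b : Vtx U,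
    treeSameComp (G U) (δup V U) a b → δdown U V a = δdown U V b
  /-- … with value `f̂_V` on the component containing `f̂_U` -/
  bgi_mark : ∀ U V : Idx, pnest V U → ∀ f : F,
    mark U f ≠ δup V U → δdown U V (mark U f) = mark V f
  /-- the marked tuples are 0-consistent (transverse case) -/
  mark_consistent_t : ∀ (f : F) (U V : Idx),
    (U ≠ V ∧ ¬ pnest U V ∧ ¬ pnest V U ∧ ¬ orth U V) →
    mark U f = δup V U ∨ mark V f = δup U V
  /-- the marked tuples are 0-consistent (nested case) -/
  mark_consistent_n : ∀ (f : F) (U V : Idx), pnest V U →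
    mark U f = δup V U ∨ mark V f = δdown U V (mark U f)

namespace HFT

variable {Idx : Type*} [Fintype Idx] {Vtx : Idx → Type*} [∀ U, Fintype (Vtx U)]
  {F : Type*} [Fintype F]

/-- Transversality `U ⋔ V`: distinct, not nested either way, not orthogonal. -/
def transv (H : HFT Idx Vtx F) (U V : Idx) : Prop :=
  U ≠ V ∧ ¬ H.pnest U V ∧ ¬ H.pnest V U ∧ ¬ H.orth U V

/-- A tuple of vertices is 0-consistent. -/
def ZeroConsistent (H : HFT Idx Vtx F) (x : ∀ U, Vtx U) : Prop :=
  (∀ U V, H.transv U V → x U = H.δup V U ∨ x V = H.δup U V) ∧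
  (∀ U V, H.pnest V U → x U = H.δup V U ∨ x V = H.δdown U V (x U))

/-- The set `Q` of all 0-consistent tuples. -/
def Q (H : HFT Idx Vtx F) : Set (∀ U, Vtx U) := {x | H.ZeroConsistent x}

/-- The ℓ¹ metric on tuples: `d_Q(x, y) = Σ_U d_{T_U}(x_U, y_U)`. -/
noncomputable def dQ (H : HFT Idx Vtx F) (x y : ∀ U, Vtx U) : ℕ :=
  ∑ U : Idx, (H.G U).dist (x U) (y U)

/-- The half-tree of the edge `{u, v}` of `T_U` on the `u`-side: the vertices strictly
closer to `u` than to `v`. -/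
def halfTree (H : HFT Idx Vtx F) (U : Idx) (u v : Vtx U) : Set (Vtx U) :=
  {w | (H.G U).dist w u < (H.G U).dist w v}

/-- The half-space of `Q` determined by the half-tree of `{u, v} ⊆ T_U` on the
`u`-side. -/
def halfSpace (H : HFT Idx Vtx F) (U : Idx) (u v : Vtx U) : Set (∀ W, Vtx W) :=
  {x | x ∈ H.Q ∧ x U ∈ H.halfTree U u v}

/-- Two walls (dual to the edge `{u, v}` of `T_U` and the edge `{u', v'}` of `T_V`)
cross: all four intersections of half-spaces are nonempty. -/
def Crosses (H : HFT Idx Vtx F) (U : Idx) (u v : Vtx U) (V : Idx) (u' v' : Vtx V) :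
    Prop :=
  (H.halfSpace U u v ∩ H.halfSpace V u' v').Nonempty ∧
  (H.halfSpace U u v ∩ H.halfSpace V v' u').Nonempty ∧
  (H.halfSpace U v u ∩ H.halfSpace V u' v').Nonempty ∧
  (H.halfSpace U v u ∩ H.halfSpace V v' u').Nonempty

/-- Two walls are transverse: none of the four inclusions among their half-spaces and
complements holds. -/
def WallTransverse (H : HFT Idx Vtx F) (U : Idx) (u v : Vtx U) (V : Idx)
    (u' v' : Vtx V) : Prop :=
  ¬ (H.halfSpace U u v ⊆ H.halfSpace V u' v') ∧
  ¬ (H.halfSpace U u v ⊆ H.halfSpace V v' u') ∧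
  ¬ (H.halfSpace U v u ⊆ H.halfSpace V u' v') ∧
  ¬ (H.halfSpace U v u ⊆ H.halfSpace V v' u')

end HFT

variable {Idx : Type*} [Fintype Idx] {Vtx : Idx → Type*} [∀ U, Fintype (Vtx U)]
  {F : Type*} [Fintype F]


namespace TreeAux

open SimpleGraph Walk

variable {α : Type*} {G : SimpleGraph α}

lemma path_length (hT : G.IsTree) {x y : α} (p : G.Walk x y) (hp : p.IsPath) :
    p.length = G.dist x y := by
  obtain ⟨q, hq, hl⟩ := hT.isConnected.exists_path_of_dist x y
  have := hT.IsAcyclic.path_unique ⟨p, hp⟩ ⟨q, hq⟩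
  rw [Subtype.mk.injEq] at this
  rw [this, hl]

lemma dist_split (hT : G.IsTree) {x y m : α} (p : G.Walk x y) (hp : p.IsPath)
    (hm : m ∈ p.support) : G.dist x m + G.dist m y = G.dist x y := by
  classical
  rw [← path_length hT _ (hp.takeUntil hm), ← path_length hT _ (hp.dropUntil hm),
    ← path_length hT p hp, ← Walk.length_append, Walk.take_spec]

lemma adj_dist (hT : G.IsTree) {w z : α} (h : G.Adj w z) (v : α) :
    G.dist w v = G.dist z v + 1 ∨ G.dist z v = G.dist w v + 1 := by
  obtain ⟨q, hq, hl⟩ := hT.isConnected.exists_path_of_dist z v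
  by_cases hw : w ∈ q.support
  · right
    have h1 := dist_split hT q hq hw
    have h2 : G.dist z w = 1 := dist_eq_one_iff_adj.mpr h.symm
    omega
  · left
    have hp : (Walk.cons h q).IsPath := hq.cons hw
    have := path_length hT _ hp
    simp only [Walk.length_cons] at this
    omega

lemma side_dichotomy (hT : G.IsTree) {u v : α} (h : G.Adj u v) (w : α) :
    G.dist w u < G.dist w v ∨ G.dist w v < G.dist w u := by
  have dc : ∀ a b : α, G.dist a b = G.dist b a := fun _ _ => SimpleGraph.dist_comm
  have := adj_dist hT h w
  rw [dc u w, dc v w] at this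
  omega

lemma side_succ (hT : G.IsTree) {u v w : α} (h : G.Adj u v)
    (hw : G.dist w u < G.dist w v) : G.dist w v = G.dist w u + 1 := by
  have dc : ∀ a b : α, G.dist a b = G.dist b a := fun _ _ => SimpleGraph.dist_comm
  have := adj_dist hT h w
  rw [dc u w, dc v w] at this
  omega

lemma adj_cross_eq (hT : G.IsTree) {u v w w' : α} (huv : G.Adj u v) (hww' : G.Adj w w')
    (hw : G.dist w u < G.dist w v) (hw' : G.dist w' v < G.dist w' u) :
    w = u ∧ w' = v := by
  classical
  have dc : ∀ a b : α, G.dist a b = G.dist b a := fun _ _ => SimpleGraph.dist_comm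
  have h1 : G.dist w v = G.dist w u + 1 := side_succ hT huv hw
  have h2 : G.dist w' u = G.dist w' v + 1 := side_succ hT huv.symm hw'
  have h3 := adj_dist hT hww' u
  have h4 := adj_dist hT hww' v
  have hdww' : G.dist w w' = 1 := dist_eq_one_iff_adj.mpr hww'
  have hdvu : G.dist v u = 1 := dist_eq_one_iff_adj.mpr huv.symm
  -- derive d w' v = d w u and d w' u = d w u + 1
  have h5 : G.dist w' v = G.dist w u ∧ G.dist w' u = G.dist w u + 1 := by omega
  obtain ⟨p, hp, hpl⟩ := hT.isConnected.exists_path_of_dist w u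
  obtain ⟨q, hq, hql⟩ := hT.isConnected.exists_path_of_dist w' v
  have hvp : v ∉ p.support := by
    intro hmem
    have := dist_split hT p hp hmem
    omega
  have hwq : w ∉ q.support := by
    intro hmem
    have := dist_split hT q hq hmem
    rw [dc w' w] at this
    omega
  have hQ : (Walk.cons hww' q).IsPath := hq.cons hwq
  have hP : (p.append (Walk.cons huv Walk.nil)).IsPath := by
    rw [Walk.isPath_def, Walk.support_append]
    simp only [Walk.support_cons, Walk.support_nil, List.tail_cons]
    rw [List.nodup_append]
    exact ⟨hp.support_nodup, List.nodup_singleton v,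
      by simpa [List.disjoint_singleton] using (fun a ha hav => hvp (hav ▸ ha) : ∀ a ∈ p.support, ¬a = v)⟩
  have := hT.IsAcyclic.path_unique ⟨_, hP⟩ ⟨_, hQ⟩
  rw [Subtype.mk.injEq] at this
  have hw'P : w' ∈ (p.append (Walk.cons huv Walk.nil)).support := by
    rw [this]
    simp [Walk.support_cons]
  rw [Walk.support_append] at hw'P
  simp only [Walk.support_cons, Walk.support_nil, List.tail_cons, List.mem_append,
    List.mem_singleton] at hw'P
  rcases hw'P with hw'p | hw'v
  · exfalso
    have := dist_split hT p hp hw'p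
    rw [dc w w'] at this
    omega
  · subst hw'v
    have : G.dist w u = 0 := by omega
    have hwu : w = u := (hT.isConnected.dist_eq_zero_iff).mp this
    exact ⟨hwu, rfl⟩

lemma walk_cross (hT : G.IsTree) {u v x y : α} (huv : G.Adj u v) (p : G.Walk x y)
    (hx : G.dist x u < G.dist x v) (hy : G.dist y v < G.dist y u) :
    v ∈ p.support := by
  classical
  revert hx hy
  induction p with
  | nil => intro hx hy; omega
  | @cons a b c hadj q ih =>
    intro hx hy
    rcases side_dichotomy hT huv b with hb | hb
    · simpa [Walk.support_cons] using Or.inr (ih hb hy)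
    · have := (adj_cross_eq hT huv hadj hx hb).2
      subst this
      simp [Walk.support_cons, Walk.start_mem_support]

lemma edge_sep (hT : G.IsTree) {u v x y : α} (huv : G.Adj u v)
    (hx : G.dist x u < G.dist x v) (hy : G.dist y v < G.dist y u) :
    G.dist x y = G.dist x u + 1 + G.dist v y := by
  obtain ⟨p, hp, hl⟩ := hT.isConnected.exists_path_of_dist x y
  have hv := walk_cross hT huv p hx hy
  have h1 := dist_split hT p hp hv
  have h2 := side_succ hT huv hx
  omega

lemma half_convex (hT : G.IsTree) {u v a b m : α} (huv : G.Adj u v)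
    (ha : G.dist a u < G.dist a v) (hb : G.dist b u < G.dist b v)
    (hm : G.dist a m + G.dist m b = G.dist a b) :
    G.dist m u < G.dist m v := by
  by_contra hcon
  have hm' : G.dist m v < G.dist m u := (side_dichotomy hT huv m).resolve_left hcon
  have h1 := edge_sep hT huv ha hm'
  have h2 := edge_sep hT huv hb hm'
  have dc : ∀ a b : α, G.dist a b = G.dist b a := fun _ _ => SimpleGraph.dist_comm
  have tri : G.dist a b ≤ G.dist a u + G.dist u b := hT.isConnected.dist_triangle
  rw [dc m b] at hm
  rw [dc u b] at tri
  omega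

lemma exists_leaf_in_half (hT : G.IsTree) [Fintype α] {u v : α}
    (huv : G.Adj u v) :
    ∃ w : α, G.dist w u < G.dist w v ∧ Set.Subsingleton {z : α | G.Adj w z} := by
  classical
  have hu : G.dist u u < G.dist u v := by
    rw [SimpleGraph.dist_self, dist_eq_one_iff_adj.mpr huv]
    omega
  obtain ⟨w, hwS, hwmax⟩ := Finset.exists_max_image
    (Finset.univ.filter fun w => G.dist w u < G.dist w v) (fun w => G.dist w v)
    ⟨u, by simpa using hu⟩
  simp only [Finset.mem_filter, Finset.mem_univ, true_and] at hwS
  have hwv : G.dist w v = G.dist w u + 1 := side_succ hT huv hwS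
  have key : ∀ z, G.Adj w z → G.dist z v + 1 = G.dist w v := by
    intro z hz
    rcases adj_dist hT hz v with h1 | h1
    · omega
    · exfalso
      have hz1 : G.dist z u ≤ G.dist z w + G.dist w u := hT.isConnected.dist_triangle
      have hzw : G.dist z w = 1 := dist_eq_one_iff_adj.mpr hz.symm
      have hzS : G.dist z u < G.dist z v := by omega
      have := hwmax z (by simp [hzS])
      omega
  refine ⟨w, hwS, ?_⟩
  intro z1 hz1 z2 hz2
  simp only [Set.mem_setOf_eq] at hz1 hz2
  obtain ⟨q1, hq1, hl1⟩ := hT.isConnected.exists_path_of_dist z1 v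
  obtain ⟨q2, hq2, hl2⟩ := hT.isConnected.exists_path_of_dist z2 v
  have k1 := key z1 hz1
  have k2 := key z2 hz2
  have hw1 : w ∉ q1.support := by
    intro hm
    have := dist_split hT q1 hq1 hm
    have : G.dist z1 w = 1 := dist_eq_one_iff_adj.mpr hz1.symm
    have := dist_split hT q1 hq1 hm
    rw [‹G.dist z1 w = 1›] at this
    omega
  have hw2 : w ∉ q2.support := by
    intro hm
    have h' := dist_split hT q2 hq2 hm
    have : G.dist z2 w = 1 := dist_eq_one_iff_adj.mpr hz2.symm
    rw [this] at h'
    omega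
  have hP1 : (Walk.cons hz1 q1).IsPath := hq1.cons hw1
  have hP2 : (Walk.cons hz2 q2).IsPath := hq2.cons hw2
  have heq := hT.IsAcyclic.path_unique ⟨_, hP1⟩ ⟨_, hP2⟩
  rw [Subtype.mk.injEq] at heq
  have hsup := congrArg Walk.support heq
  rw [Walk.support_cons, Walk.support_cons, q1.support_eq_cons, q2.support_eq_cons] at hsup
  exact (List.cons.injEq _ _ _ _).mp ((List.cons.injEq _ _ _ _).mp hsup).2 |>.1

end TreeAux

section HFTAux

variable {Idx : Type*} [Fintype Idx] {Vtx : Idx → Type*} [∀ U, Fintype (Vtx U)]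
  {F : Type*} [Fintype F]

lemma marked_mem_Q (H : HFT Idx Vtx F) (f : F) : (fun W => H.mark W f) ∈ H.Q :=
  ⟨fun A B hAB => H.mark_consistent_t f A B hAB,
   fun A B hAB => H.mark_consistent_n f A B hAB⟩

lemma halfspace_nonempty (H : HFT Idx Vtx F) (U : Idx) (u v : Vtx U)
    (h : (H.G U).Adj u v) : (H.halfSpace U u v).Nonempty := by
  obtain ⟨w, hw, hleaf⟩ := TreeAux.exists_leaf_in_half (H.tree U) h
  obtain ⟨f, hf⟩ := H.leaf_marked U w hleaf
  refine ⟨fun W => H.mark W f, marked_mem_Q H f, ?_⟩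
  simp only [HFT.halfTree, Set.mem_setOf_eq, hf]
  exact hw

lemma transverse_orth (H : HFT Idx Vtx F) (U V : Idx) (u v : Vtx U) (u' v' : Vtx V)
    (hU : (H.G U).Adj u v) (hV : (H.G V).Adj u' v')
    (hW : H.WallTransverse U u v V u' v') : H.orth U V := by
  classical
  obtain ⟨hn1, hn2, hn3, hn4⟩ := hW
  rw [Set.not_subset] at hn1 hn2 hn3 hn4
  obtain ⟨p, hp1, hp2⟩ := hn1
  obtain ⟨q, hq1, hq2⟩ := hn2
  obtain ⟨r, hr1, hr2⟩ := hn3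
  obtain ⟨s, hs1, hs2⟩ := hn4
  simp only [HFT.halfSpace, HFT.halfTree, Set.mem_setOf_eq, not_and] at hp1 hq1 hr1 hs1 hp2 hq2 hr2 hs2
  obtain ⟨hpQ, hpU⟩ := hp1
  obtain ⟨hqQ, hqU⟩ := hq1
  obtain ⟨hrQ, hrU⟩ := hr1
  obtain ⟨hsQ, hsU⟩ := hs1
  have hpV : (H.G V).dist (p V) v' < (H.G V).dist (p V) u' :=
    (TreeAux.side_dichotomy (H.tree V) hV (p V)).resolve_left (hp2 hpQ)
  have hqV : (H.G V).dist (q V) u' < (H.G V).dist (q V) v' :=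
    (TreeAux.side_dichotomy (H.tree V) hV.symm (q V)).resolve_left (hq2 hqQ)
  have hrV : (H.G V).dist (r V) v' < (H.G V).dist (r V) u' :=
    (TreeAux.side_dichotomy (H.tree V) hV (r V)).resolve_left (hr2 hrQ)
  have hsV : (H.G V).dist (s V) u' < (H.G V).dist (s V) v' :=
    (TreeAux.side_dichotomy (H.tree V) hV.symm (s V)).resolve_left (hs2 hsQ)
  by_contra horth
  by_cases hUV : U = V
  · subst hUV
    have dc : ∀ a b : Vtx U, (H.G U).dist a b = (H.G U).dist b a :=
      fun _ _ => SimpleGraph.dist_comm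
    rcases TreeAux.side_dichotomy (H.tree U) hU u' with hu's | hu's <;>
      rcases TreeAux.side_dichotomy (H.tree U) hU v' with hv's | hv's
    · -- u', v' both on the u-side: use r and s
      have e1 := TreeAux.edge_sep (H.tree U) hU hu's hrU
      have e2 := TreeAux.edge_sep (H.tree U) hU hv's hrU
      have e3 := TreeAux.edge_sep (H.tree U) hU hu's hsU
      have e4 := TreeAux.edge_sep (H.tree U) hU hv's hsU
      rw [dc (r U) v', dc (r U) u'] at hrV
      rw [dc (s U) v', dc (s U) u'] at hsV
      omega
    · -- u' on u-side, v' on v-side: the walls are equal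
      obtain ⟨h1, h2⟩ := TreeAux.adj_cross_eq (H.tree U) hU hV hu's hv's
      subst h1; subst h2
      omega
    · -- u' on v-side, v' on u-side: the walls are equal (reversed)
      obtain ⟨h1, h2⟩ := TreeAux.adj_cross_eq (H.tree U) hU hV.symm hv's hu's
      subst h1; subst h2
      omega
    · -- u', v' both on the v-side: use p and q
      have e1 := TreeAux.edge_sep (H.tree U) hU.symm hu's hpU
      have e2 := TreeAux.edge_sep (H.tree U) hU.symm hv's hpU
      have e3 := TreeAux.edge_sep (H.tree U) hU.symm hu's hqU
      have e4 := TreeAux.edge_sep (H.tree U) hU.symm hv's hqU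
      rw [dc (p U) v', dc (p U) u'] at hpV
      rw [dc (q U) v', dc (q U) u'] at hqV
      omega
  by_cases hUV' : H.pnest U V
  · rcases TreeAux.side_dichotomy (H.tree V) hV (H.δup U V) with hδ | hδ
    · -- δ^U_V on the u'-side: use p and r, whose V-coordinates are on the v'-side
      have hpne : p V ≠ H.δup U V := by intro h; rw [h] at hpV; omega
      have hrne : r V ≠ H.δup U V := by intro h; rw [h] at hrV; omega
      have hp3 : p U = H.δdown V U (p V) := (hpQ.2 V U hUV').resolve_left hpne
      have hr3 : r U = H.δdown V U (r V) := (hrQ.2 V U hUV').resolve_left hrne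
      have hts : treeSameComp (H.G V) (H.δup U V) (p V) (r V) := by
        refine ⟨hpne, hrne, fun h => ?_⟩
        have := TreeAux.half_convex (H.tree V) hV.symm hpV hrV h
        omega
      have hEq := H.bgi_const V U hUV' (p V) (r V) hts
      rw [← hp3, ← hr3] at hEq
      rw [hEq] at hpU
      omega
    · -- δ^U_V on the v'-side: use q and s
      have hqne : q V ≠ H.δup U V := by intro h; rw [h] at hqV; omega
      have hsne : s V ≠ H.δup U V := by intro h; rw [h] at hsV; omega
      have hq3 : q U = H.δdown V U (q V) := (hqQ.2 V U hUV').resolve_left hqne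
      have hs3 : s U = H.δdown V U (s V) := (hsQ.2 V U hUV').resolve_left hsne
      have hts : treeSameComp (H.G V) (H.δup U V) (q V) (s V) := by
        refine ⟨hqne, hsne, fun h => ?_⟩
        have := TreeAux.half_convex (H.tree V) hV hqV hsV h
        omega
      have hEq := H.bgi_const V U hUV' (q V) (s V) hts
      rw [← hq3, ← hs3] at hEq
      rw [hEq] at hqU
      omega
  by_cases hVU' : H.pnest V U
  · rcases TreeAux.side_dichotomy (H.tree U) hU (H.δup V U) with hδ | hδ
    · -- δ^V_U on the u-side: use r and s
      have hrne : r U ≠ H.δup V U := by intro h; rw [h] at hrU; omega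
      have hsne : s U ≠ H.δup V U := by intro h; rw [h] at hsU; omega
      have hr3 : r V = H.δdown U V (r U) := (hrQ.2 U V hVU').resolve_left hrne
      have hs3 : s V = H.δdown U V (s U) := (hsQ.2 U V hVU').resolve_left hsne
      have hts : treeSameComp (H.G U) (H.δup V U) (r U) (s U) := by
        refine ⟨hrne, hsne, fun h => ?_⟩
        have := TreeAux.half_convex (H.tree U) hU.symm hrU hsU h
        omega
      have hEq := H.bgi_const U V hVU' (r U) (s U) hts
      rw [← hr3, ← hs3] at hEq
      rw [hEq] at hrV
      omega
    · -- δ^V_U on the v-side: use p and q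
      have hpne : p U ≠ H.δup V U := by intro h; rw [h] at hpU; omega
      have hqne : q U ≠ H.δup V U := by intro h; rw [h] at hqU; omega
      have hp3 : p V = H.δdown U V (p U) := (hpQ.2 U V hVU').resolve_left hpne
      have hq3 : q V = H.δdown U V (q U) := (hqQ.2 U V hVU').resolve_left hqne
      have hts : treeSameComp (H.G U) (H.δup V U) (p U) (q U) := by
        refine ⟨hpne, hqne, fun h => ?_⟩
        have := TreeAux.half_convex (H.tree U) hU hpU hqU h
        omega
      have hEq := H.bgi_const U V hVU' (p U) (q U) hts
      rw [← hp3, ← hq3] at hEq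
      rw [hEq] at hpV
      omega
  -- transverse case
  have htr : H.transv U V := ⟨hUV, hUV', hVU', horth⟩
  rcases TreeAux.side_dichotomy (H.tree U) hU (H.δup V U) with h1 | h1 <;>
    rcases TreeAux.side_dichotomy (H.tree V) hV (H.δup U V) with h2 | h2
  · rcases hrQ.1 U V htr with h | h
    · rw [h] at hrU; omega
    · rw [h] at hrV; omega
  · rcases hsQ.1 U V htr with h | h
    · rw [h] at hsU; omega
    · rw [h] at hsV; omega
  · rcases hpQ.1 U V htr with h | h
    · rw [h] at hpU; omega
    · rw [h] at hpV; omega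
  · rcases hqQ.1 U V htr with h | h
    · rw [h] at hqU; omega
    · rw [h] at hqV; omega

end HFTAux

/-- **The pocset of half-spaces** (Proposition `pocset`, finite case). -/
theorem pocset_of_halfspaces (H : HFT Idx Vtx F) :
    -- every half-space is nonempty and disjoint from its complementary half-space
    (∀ (U : Idx) (u v : Vtx U), (H.G U).Adj u v →
      (H.halfSpace U u v).Nonempty ∧ H.halfSpace U u v ∩ H.halfSpace U v u = ∅) ∧
    -- (1) transverse walls have orthogonal labels
    (∀ (U V : Idx) (u v : Vtx U) (u' v' : Vtx V),
      (H.G U).Adj u v → (H.G V).Adj u' v' →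
      H.WallTransverse U u v V u' v' → H.orth U V) ∧
    -- (2) any family of pairwise transverse walls has cardinality at most the maximal
    -- cardinality of a pairwise-orthogonal subset of the index set (finite width)
    (∀ (n : ℕ) (lab : Fin n → Idx) (e : (i : Fin n) → Vtx (lab i) × Vtx (lab i)),
      (∀ i, (H.G (lab i)).Adj (e i).1 (e i).2) →
      (∀ i j, i ≠ j →
        H.WallTransverse (lab i) (e i).1 (e i).2 (lab j) (e j).1 (e j).2) →
      ∃ A : Finset Idx, (∀ a ∈ A, ∀ b ∈ A, a ≠ b → H.orth a b) ∧ n ≤ A.card) := by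
  classical
  refine ⟨?_, fun U V u v u' v' hU hV hW => transverse_orth H U V u v u' v' hU hV hW, ?_⟩
  · intro U u v h
    refine ⟨halfspace_nonempty H U u v h, ?_⟩
    apply Set.eq_empty_iff_forall_notMem.mpr
    intro x hx
    have ha := hx.1.2
    have hb := hx.2.2
    simp only [HFT.halfTree, Set.mem_setOf_eq] at ha hb
    omega
  · intro n lab e hadj htrans
    have horth : ∀ i j, i ≠ j → H.orth (lab i) (lab j) := fun i j hij =>
      transverse_orth H _ _ _ _ _ _ (hadj i) (hadj j) (htrans i j hij)
    have hinj : Function.Injective lab := by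
      intro i j hij
      by_contra hne
      exact H.orth_irrefl (lab j) (hij ▸ horth i j hne)
    refine ⟨Finset.univ.image lab, ?_, ?_⟩
    · intro a ha b hb hab
      simp only [Finset.mem_image, Finset.mem_univ, true_and] at ha hb
      obtain ⟨i, rfl⟩ := ha
      obtain ⟨j, rfl⟩ := hb
      exact horth i j (fun h => hab (by rw [h]))
    · rw [Finset.card_image_of_injective _ hinj, Finset.card_univ, Fintype.card_fin]
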